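/- Let ‖·‖ be the Euclidean norm on ℝ² = EuclideanSpace ℝ (Fin 2). Let λ ∈ (0,1) and J, K > 0 be real numbers. Let B : ℝ² → ℝ² be a linear map such that ‖Bⁿ w‖ ≤ K · λ⁻ⁿ · ‖w‖ for every natural number n and every w ∈ ℝ². Let G : ℝ² → ℝ² be any function such that ‖G(y) - B(y)‖ ≤ J for every y ∈ ℝ². Suppose x ∈ ℝ² satisfies B(x) = λ⁻¹ • x. Then for every natural number n, ‖Gⁿ(x) - Gⁿ(0)‖ ≥ (‖x‖ - 2·J·K·(λ⁻¹ - 1)⁻¹) · λ⁻ⁿ, where Gⁿ denotes the n-fold iterate G^[n] of G. Consequently, if ‖x‖ > 2·J·K·(λ⁻¹ - 1)⁻¹, then ‖Gⁿ(x) - Gⁿ(0)‖ tends to infinity as n tends to infinity. -/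

import Mathlib

/-- The divergence estimate: under the same hypotheses as the iteration estimate,
`‖Gⁿ(x) - Gⁿ(0)‖ ≥ (‖x‖ - 2JK(λ⁻¹-1)⁻¹) λ⁻ⁿ`; consequently if
`‖x‖ > 2JK(λ⁻¹-1)⁻¹` then `‖Gⁿ(x) - Gⁿ(0)‖ → ∞`. -/
theorem stmt_6 (lam J K : ℝ) (hlam0 : 0 < lam) (hlam1 : lam < 1) (hJ : 0 < J) (hK : 0 < K)
    (B : EuclideanSpace ℝ (Fin 2) →ₗ[ℝ] EuclideanSpace ℝ (Fin 2))
    (hB : ∀ (n : ℕ) (w : EuclideanSpace ℝ (Fin 2)), ‖(B ^ n) w‖ ≤ K * lam⁻¹ ^ n * ‖w‖)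
    (G : EuclideanSpace ℝ (Fin 2) → EuclideanSpace ℝ (Fin 2))
    (hG : ∀ y, ‖G y - B y‖ ≤ J)
    (x : EuclideanSpace ℝ (Fin 2)) (hx : B x = lam⁻¹ • x) :
    (∀ n : ℕ, (‖x‖ - 2 * J * K * (lam⁻¹ - 1)⁻¹) * lam⁻¹ ^ n ≤ ‖G^[n] x - G^[n] 0‖) ∧
    (2 * J * K * (lam⁻¹ - 1)⁻¹ < ‖x‖ →
      Filter.Tendsto (fun n : ℕ => ‖G^[n] x - G^[n] 0‖) Filter.atTop Filter.atTop) := by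
  have hli : 1 < lam⁻¹ := (one_lt_inv₀ hlam0).mpr hlam1
  have hr : 0 < lam⁻¹ - 1 := by linarith
  set r := lam⁻¹ - 1 with hrdef
  -- key iteration estimate
  have key : ∀ (n : ℕ) (y : EuclideanSpace ℝ (Fin 2)),
      ‖G^[n] y - (B ^ n) y‖ ≤ J * K * r⁻¹ * (lam⁻¹ ^ n - 1) := by
    intro n
    induction n with
    | zero => intro y; simp
    | succ n ih =>
      intro y
      have h1 : G^[n + 1] y - (B ^ (n + 1)) y
          = ((B ^ n) (G y - B y)) + (G^[n] (G y) - (B ^ n) (G y)) := by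
        rw [Function.iterate_succ_apply, pow_succ, Module.End.mul_apply, map_sub]
        abel
      rw [h1]
      have h2 : ‖(B ^ n) (G y - B y)‖ ≤ J * K * lam⁻¹ ^ n := by
        calc ‖(B ^ n) (G y - B y)‖ ≤ K * lam⁻¹ ^ n * ‖G y - B y‖ := hB n _
          _ ≤ K * lam⁻¹ ^ n * J := by
              apply mul_le_mul_of_nonneg_left (hG y)
              positivity
          _ = J * K * lam⁻¹ ^ n := by ring
      have h3 := ih (G y)
      have h4 : J * K * lam⁻¹ ^ n + J * K * r⁻¹ * (lam⁻¹ ^ n - 1)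
          = J * K * r⁻¹ * (lam⁻¹ ^ (n + 1) - 1) := by
        rw [hrdef]
        have hc : (lam⁻¹ - 1)⁻¹ * (lam⁻¹ - 1) = 1 := inv_mul_cancel₀ (by rw [hrdef] at hr; exact hr.ne')
        rw [pow_succ]
        linear_combination (-(J * K * lam⁻¹ ^ n)) * hc
      calc ‖(B ^ n) (G y - B y) + (G^[n] (G y) - (B ^ n) (G y))‖
          ≤ ‖(B ^ n) (G y - B y)‖ + ‖G^[n] (G y) - (B ^ n) (G y)‖ := norm_add_le _ _
        _ ≤ J * K * lam⁻¹ ^ n + J * K * r⁻¹ * (lam⁻¹ ^ n - 1) := add_le_add h2 h3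
        _ = J * K * r⁻¹ * (lam⁻¹ ^ (n + 1) - 1) := h4
  have hBn : ∀ n : ℕ, (B ^ n) x = lam⁻¹ ^ n • x := by
    intro n
    induction n with
    | zero => simp
    | succ n ih =>
      rw [pow_succ, Module.End.mul_apply, hx, map_smul, ih, smul_smul, mul_comm, ← pow_succ]
  have hmain : ∀ n : ℕ, (‖x‖ - 2 * J * K * r⁻¹) * lam⁻¹ ^ n ≤ ‖G^[n] x - G^[n] 0‖ := by
    intro n
    have e0 : (B ^ n) (0 : EuclideanSpace ℝ (Fin 2)) = 0 := map_zero _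
    have h1 := key n x
    have h2 := key n 0
    rw [e0, sub_zero] at h2
    have hnorm : ‖(B ^ n) x‖ = lam⁻¹ ^ n * ‖x‖ := by
      rw [hBn n, norm_smul, Real.norm_eq_abs,
        abs_of_pos (pow_pos (inv_pos.mpr hlam0) n)]
    have hdecomp : (B ^ n) x = (G^[n] x - G^[n] 0) - (G^[n] x - (B ^ n) x) + G^[n] 0 := by
      abel
    have h3 : lam⁻¹ ^ n * ‖x‖ ≤ ‖G^[n] x - G^[n] 0‖
        + J * K * r⁻¹ * (lam⁻¹ ^ n - 1) + J * K * r⁻¹ * (lam⁻¹ ^ n - 1) := by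
      calc lam⁻¹ ^ n * ‖x‖ = ‖(B ^ n) x‖ := hnorm.symm
        _ = ‖(G^[n] x - G^[n] 0) - (G^[n] x - (B ^ n) x) + G^[n] 0‖ := by rw [← hdecomp]
        _ ≤ ‖(G^[n] x - G^[n] 0) - (G^[n] x - (B ^ n) x)‖ + ‖G^[n] 0‖ := norm_add_le _ _
        _ ≤ ‖G^[n] x - G^[n] 0‖ + ‖G^[n] x - (B ^ n) x‖ + ‖G^[n] 0‖ :=
            add_le_add_left (norm_sub_le _ _) _
        _ ≤ ‖G^[n] x - G^[n] 0‖ + J * K * r⁻¹ * (lam⁻¹ ^ n - 1)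
            + J * K * r⁻¹ * (lam⁻¹ ^ n - 1) := by
            gcongr
    have hpow1 : (1:ℝ) ≤ lam⁻¹ ^ n := one_le_pow₀ hli.le
    have hbound : J * K * r⁻¹ * (lam⁻¹ ^ n - 1) ≤ J * K * r⁻¹ * lam⁻¹ ^ n := by
      have : (0:ℝ) ≤ J * K * r⁻¹ := by positivity
      nlinarith
    nlinarith [h3]
  refine ⟨hmain, fun hlt => ?_⟩
  have hc : 0 < ‖x‖ - 2 * J * K * r⁻¹ := by linarith
  have htend : Filter.Tendsto (fun n : ℕ => (‖x‖ - 2 * J * K * r⁻¹) * lam⁻¹ ^ n)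
      Filter.atTop Filter.atTop :=
    Filter.Tendsto.const_mul_atTop hc (tendsto_pow_atTop_atTop_of_one_lt hli)
  exact Filter.tendsto_atTop_mono hmain htend
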